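/- Let S = (b + ℤⁿ) ∩ Q be a polyhedrally-truncated affine lattice, B = {r : aⁱ·r ≤ 1, i ∈ I} a maximal S-free convex 0-neighborhood with ψ(r) = max_{i∈I} aⁱ·r, and p* ∈ ℝⁿ. Let (w, N) ∈ ℝⁿ × ℕ attain the supremum in V_ψ(p*) = sup{(1 − ψ(w))/N : w + Np* ∈ S}. Then (R_B(w) ∪ (R_B(w) + p*) ∪ ⋯ ∪ (R_B(w) + Np*)) + W_S ⊆ 𝓕_{ψ,p*}. Moreover, for every π ∈ 𝓛_{ψ,p*}, every p ∈ ⋃_{i=0}^{N}(R_B(w) + i·p*), and every u ∈ W_S, one has π(p + u) = π(p) = ψ*_{B(V_ψ(p*),p*)}((p, 0)). -/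

import Mathlib

open scoped BigOperators
open Pointwise

noncomputable section

/-- `(ψ, π)` is a valid (partial) cut-generating pair for `S, R, P`. -/
def ValidPair {E : Type*} [AddCommGroup E] [Module ℝ E]
    (S R P : Set E) (psi pi : E → ℝ) : Prop :=
  ∀ (k l : ℕ) (r : Fin k → E) (p : Fin l → E),
    (∀ i, r i ∈ R) → (∀ j, p j ∈ P) →
    ∀ (s : Fin k → ℝ) (y : Fin l → ℕ),
      (∀ i, 0 ≤ s i) →
      (∑ i, s i • r i) + (∑ j, (y j : ℝ) • p j) ∈ S →
      1 ≤ (∑ i, psi (r i) * s i) + (∑ j, pi (p j) * (y j : ℝ))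

/-- `W_S⁺`. -/
def Wplus {E : Type*} [AddCommGroup E] [Module ℝ E] (S : Set E) : Set E :=
  {w | ∀ s ∈ S, ∀ lam : ℕ, s + (lam : ℝ) • w ∈ S}

/-- `W_S` (integer translations). -/
def Wint {E : Type*} [AddCommGroup E] [Module ℝ E] (S : Set E) : Set E :=
  {w | ∀ s ∈ S, ∀ lam : ℤ, s + (lam : ℝ) • w ∈ S}

/-- `π` is a lifting of `ψ` (full-space setting). -/
def IsLifting {E : Type*} [AddCommGroup E] [Module ℝ E] (S : Set E) (psi pi : E → ℝ) : Prop :=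
  ValidPair S Set.univ Set.univ psi pi

/-- `π` is a minimal lifting of `ψ` (full-space setting). -/
def IsMinimalLifting {E : Type*} [AddCommGroup E] [Module ℝ E] (S : Set E)
    (psi pi : E → ℝ) : Prop :=
  IsLifting S psi pi ∧ ∀ pi' : E → ℝ, IsLifting S psi pi' → pi' ≤ pi → pi' = pi

/-- `V_ψ(p) = inf {π(p) : π minimal lifting of ψ}`. -/
def Vpsi {E : Type*} [AddCommGroup E] [Module ℝ E] (S : Set E) (psi : E → ℝ) (p : E) : ℝ :=
  sInf {v : ℝ | ∃ pi : E → ℝ, IsMinimalLifting S psi pi ∧ pi p = v}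

/-- `𝓛_{ψ,p*}`. -/
def LiftSet {E : Type*} [AddCommGroup E] [Module ℝ E] (S : Set E) (psi : E → ℝ) (p : E) :
    Set (E → ℝ) :=
  {pi | IsMinimalLifting S psi pi ∧ pi p = Vpsi S psi p}

/-- The fixing region `𝓕_{ψ,p*}`. -/
def FixingRegion {E : Type*} [AddCommGroup E] [Module ℝ E] (S : Set E) (psi : E → ℝ)
    (p : E) : Set E :=
  {q | ∀ pi1 ∈ LiftSet S psi p, ∀ pi2 ∈ LiftSet S psi p, pi1 q = pi2 q}

/-- Dot product on `ℝⁿ`. -/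
def dotp {n : ℕ} (a b : Fin n → ℝ) : ℝ := ∑ i, a i * b i

/-- The integer points `ℤⁿ ⊆ ℝⁿ`. -/
def Zpts (n : ℕ) : Set (Fin n → ℝ) := {x | ∀ i, ∃ z : ℤ, x i = (z : ℝ)}

/-- `Q` is a rational polyhedron. -/
def IsRatPolyhedron {n : ℕ} (Q : Set (Fin n → ℝ)) : Prop :=
  ∃ (m : ℕ) (A : Fin m → Fin n → ℚ) (c : Fin m → ℚ),
    Q = {x | ∀ i, (∑ j, (A i j : ℝ) * x j) ≤ (c i : ℝ)}

/-- `B` is a maximal `T`-free convex `0`-neighborhood. -/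
def IsMaxFreeNbhd {F : Type*} [AddCommGroup F] [Module ℝ F] [TopologicalSpace F]
    (T B : Set F) : Prop :=
  Convex ℝ B ∧ (0 : F) ∈ interior B ∧ interior B ∩ T = ∅ ∧
    ∀ B' : Set F, Convex ℝ B' → (0 : F) ∈ interior B' → interior B' ∩ T = ∅ → B ⊆ B' → B' = B

/-- `ψ(r) = max_i aⁱ·r`. -/
def psiMax {n : ℕ} {ι : Type} [Fintype ι] [Nonempty ι] (a : ι → Fin n → ℝ)
    (r : Fin n → ℝ) : ℝ :=
  ⨆ i, dotp (a i) r

/-- The translated cone `B(λ, p*) ⊆ ℝⁿ × ℝ`. -/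
def Bcone {n : ℕ} {ι : Type} [Fintype ι] (a : ι → Fin n → ℝ) (lam : ℝ) (p : Fin n → ℝ) :
    Set ((Fin n → ℝ) × ℝ) :=
  {x | ∀ i, dotp (a i) x.1 + (lam - dotp (a i) p) * x.2 ≤ 1}

/-- `ℤ₊` as a subset of `ℝ`. -/
def Znn : Set ℝ := {t | ∃ k : ℕ, t = (k : ℝ)}

/-- `ψ_{B(λ,p*)}` on `ℝⁿ × ℝ`. -/
def psiB {n : ℕ} {ι : Type} [Fintype ι] [Nonempty ι] (a : ι → Fin n → ℝ) (lam : ℝ)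
    (p : Fin n → ℝ) (x : (Fin n → ℝ) × ℝ) : ℝ :=
  ⨆ i, (dotp (a i) x.1 + (lam - dotp (a i) p) * x.2)

/-- `ψ*_{B(λ,p*)}(x) = inf {ψ_{B(λ,p*)}(x + u) : u ∈ W⁺_{S×ℤ₊}}`, as an extended real. -/
def psiStarB {n : ℕ} {ι : Type} [Fintype ι] [Nonempty ι] (S : Set (Fin n → ℝ))
    (a : ι → Fin n → ℝ) (lam : ℝ) (p : Fin n → ℝ) (x : (Fin n → ℝ) × ℝ) : EReal :=
  sInf {v : EReal | ∃ u ∈ Wplus (S ×ˢ Znn), v = ((psiB a lam p (x + u) : ℝ) : EReal)}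

/-- `(w, N)` attains the supremum in `V_ψ(p*) = sup {(1 − ψ(w))/N : w + N p* ∈ S}`. -/
def AttainsSup {n : ℕ} (S : Set (Fin n → ℝ)) (psi : (Fin n → ℝ) → ℝ)
    (pstar w : Fin n → ℝ) (N : ℕ) : Prop :=
  1 ≤ N ∧ w + (N : ℝ) • pstar ∈ S ∧
    (1 - psi w) / (N : ℝ) = Vpsi S psi pstar ∧
    ∀ (w' : Fin n → ℝ) (N' : ℕ), 1 ≤ N' → w' + (N' : ℝ) • pstar ∈ S →
      (1 - psi w') / (N' : ℝ) ≤ (1 - psi w) / (N : ℝ)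

/-- The spindle `R_B(x)` in `ℝⁿ`, with maximizing index `k`. -/
def spindleK {n : ℕ} {ι : Type} [Fintype ι] (a : ι → Fin n → ℝ) (k : ι) (x : Fin n → ℝ) :
    Set (Fin n → ℝ) :=
  {r | ∀ i, dotp (a i - a k) r ≤ 0 ∧ dotp (a i - a k) (x - r) ≤ 0}

section AuxLemmas

lemma dotp_sub_left {n : ℕ} (x y z : Fin n → ℝ) :
    dotp (x - y) z = dotp x z - dotp y z := by
  simp [dotp, sub_mul, Finset.sum_sub_distrib]

lemma dotp_sub_right {n : ℕ} (x y z : Fin n → ℝ) :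
    dotp x (y - z) = dotp x y - dotp x z := by
  simp [dotp, mul_sub, Finset.sum_sub_distrib]

lemma dotp_smul_right {n : ℕ} (x y : Fin n → ℝ) (c : ℝ) :
    dotp x (c • y) = c * dotp x y := by
  simp [dotp, Finset.mul_sum, mul_left_comm]

lemma le_psiMax {n : ℕ} {ι : Type} [Fintype ι] [Nonempty ι] (a : ι → Fin n → ℝ)
    (i : ι) (r : Fin n → ℝ) : dotp (a i) r ≤ psiMax a r := by
  unfold psiMax
  exact le_ciSup (f := fun i => dotp (a i) r) (Set.Finite.bddAbove (Set.finite_range _)) i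

lemma psiMax_le {n : ℕ} {ι : Type} [Fintype ι] [Nonempty ι] {a : ι → Fin n → ℝ}
    {r : Fin n → ℝ} {c : ℝ} (h : ∀ i, dotp (a i) r ≤ c) : psiMax a r ≤ c := by
  unfold psiMax
  exact ciSup_le h

lemma psiMax_eq_of_max {n : ℕ} {ι : Type} [Fintype ι] [Nonempty ι] {a : ι → Fin n → ℝ}
    {r : Fin n → ℝ} {k : ι} (h : ∀ i, dotp (a i) r ≤ dotp (a k) r) :
    psiMax a r = dotp (a k) r :=
  le_antisymm (psiMax_le h) (le_psiMax a k r)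

lemma ciSup_add_const {ι : Type} [Fintype ι] [Nonempty ι] (f : ι → ℝ) (c : ℝ) :
    (⨆ i, (f i + c)) = (⨆ i, f i) + c := by
  apply le_antisymm
  · exact ciSup_le fun i =>
      add_le_add_left (le_ciSup (Set.Finite.bddAbove (Set.finite_range f)) i) c
  · have h1 : ∀ i, f i ≤ (⨆ j, (f j + c)) - c := fun i => by
      have := le_ciSup (Set.Finite.bddAbove (Set.finite_range fun j => f j + c)) i
      linarith
    have h2 := ciSup_le h1
    linarith

lemma psiB_eval {n : ℕ} {ι : Type} [Fintype ι] [Nonempty ι] (a : ι → Fin n → ℝ)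
    (lam : ℝ) (pstar q : Fin n → ℝ) (t : ℝ) :
    psiB a lam pstar (q, t) = psiMax a (q - t • pstar) + lam * t := by
  unfold psiB psiMax
  rw [← ciSup_add_const]
  congr 1; funext i
  rw [dotp_sub_right, dotp_smul_right]; ring

lemma zero_mem_Wplus {E : Type*} [AddCommGroup E] [Module ℝ E] (S : Set E) :
    (0 : E) ∈ Wplus S := fun s hs lam => by simpa using hs

lemma Wint_mem_Wplus {E : Type*} [AddCommGroup E] [Module ℝ E] {S : Set E} {u : E}
    (hu : u ∈ Wint S) : u ∈ Wplus S := fun s hs lam => by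
  have := hu s hs (lam : ℤ)
  simpa using this

lemma Wint_neg {E : Type*} [AddCommGroup E] [Module ℝ E] {S : Set E} {u : E}
    (hu : u ∈ Wint S) : -u ∈ Wint S := fun s hs lam => by
  have := hu s hs (-lam)
  push_cast at this
  simpa [smul_neg, neg_smul] using this

lemma isLifting_min_shift {E : Type*} [AddCommGroup E] [Module ℝ E] {S : Set E}
    {psi pi : E → ℝ} (hpi : IsLifting S psi pi) {u : E} (hu : u ∈ Wplus S) :
    IsLifting S psi (fun q => min (pi q) (pi (q + u))) := by
  classical
  intro k l r p hr hp s y hs hsum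
  set p' : Fin l → E := fun j => if pi (p j + u) ≤ pi (p j) then p j + u else p j with hp'
  set M : ℕ := ∑ j, if pi (p j + u) ≤ pi (p j) then y j else 0 with hM
  have hsum2 : (∑ i, s i • r i) + (∑ j, (y j : ℝ) • p' j) ∈ S := by
    have e : (∑ j, (y j : ℝ) • p' j)
        = (∑ j, (y j : ℝ) • p j) + (M : ℝ) • u := by
      have e1 : ∀ j : Fin l, (y j : ℝ) • p' j
          = (y j : ℝ) • p j + (if pi (p j + u) ≤ pi (p j) then (y j : ℝ) else 0) • u := by
        intro j
        by_cases h : pi (p j + u) ≤ pi (p j) <;> simp [hp', h, smul_add]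
      have e2 : (M : ℝ) = ∑ j, (if pi (p j + u) ≤ pi (p j) then (y j : ℝ) else 0) := by
        rw [hM]
        push_cast
        exact Finset.sum_congr rfl fun j _ => by split_ifs <;> simp
      rw [e2, Finset.sum_smul, ← Finset.sum_add_distrib]
      exact Finset.sum_congr rfl fun j _ => e1 j
    rw [e, ← add_assoc]
    exact hu _ hsum M
  have key := hpi k l r p' hr (fun _ => Set.mem_univ _) s y hs hsum2
  refine le_trans key (le_of_eq ?_)
  congr 1
  refine Finset.sum_congr rfl fun j _ => ?_
  show pi (p' j) * (y j : ℝ) = min (pi (p j)) (pi (p j + u)) * (y j : ℝ)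
  by_cases h : pi (p j + u) ≤ pi (p j)
  · rw [hp']; simp only [if_pos h, min_eq_right h]
  · rw [hp']; simp only [if_neg h, min_eq_left (le_of_not_ge h)]

lemma minLift_shift_le {E : Type*} [AddCommGroup E] [Module ℝ E] {S : Set E}
    {psi pi : E → ℝ} (h : IsMinimalLifting S psi pi) {u : E} (hu : u ∈ Wplus S) (q : E) :
    pi q ≤ pi (q + u) := by
  have hl := isLifting_min_shift h.1 hu
  have he := h.2 _ hl fun q => min_le_left _ _
  have h2 : min (pi q) (pi (q + u)) = pi q := congrFun he q
  exact min_eq_left_iff.mp h2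

lemma minLift_period {E : Type*} [AddCommGroup E] [Module ℝ E] {S : Set E}
    {psi pi : E → ℝ} (h : IsMinimalLifting S psi pi) {u : E} (hu : u ∈ Wint S) (q : E) :
    pi (q + u) = pi q := by
  have h1 := minLift_shift_le h (Wint_mem_Wplus hu) q
  have h2 := minLift_shift_le h (Wint_mem_Wplus (Wint_neg hu)) (q + u)
  rw [add_neg_cancel_right] at h2
  exact le_antisymm h2 h1

lemma isLifting_min_main {n : ℕ} {ι : Type} [Fintype ι] [Nonempty ι] {S : Set (Fin n → ℝ)}
    {a : ι → Fin n → ℝ} {pi : (Fin n → ℝ) → ℝ} (hpi : IsLifting S (psiMax a) pi)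
    {w' : Fin n → ℝ} (hw' : w' ∈ Wplus S) (m : ℕ) (x : Fin n → ℝ) :
    IsLifting S (psiMax a)
      (fun q => min (pi q) (psiMax a (q + w' - (m : ℝ) • x) + (m : ℝ) * pi x)) := by
  classical
  set g : (Fin n → ℝ) → ℝ := fun q => psiMax a (q + w' - (m : ℝ) • x) + (m : ℝ) * pi x with hg
  intro k l r p hr hp s y hs hsum
  set A : Fin l → ℝ := fun j => if g (p j) ≤ pi (p j) then (y j : ℝ) else 0 with hA
  set M : ℕ := ∑ j, if g (p j) ≤ pi (p j) then y j else 0 with hM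
  have hMA : (M : ℝ) = ∑ j, A j := by
    rw [hM, hA]
    push_cast
    exact Finset.sum_congr rfl fun j _ => by split_ifs <;> simp
  set r2 : Fin (k + l) → (Fin n → ℝ) :=
    Fin.append r (fun j => p j + w' - (m : ℝ) • x) with hr2
  set s2 : Fin (k + l) → ℝ := Fin.append s A with hs2
  set p2 : Fin (l + 1) → (Fin n → ℝ) := Fin.snoc p x with hp2
  set y2 : Fin (l + 1) → ℕ :=
    Fin.snoc (fun j => if g (p j) ≤ pi (p j) then 0 else y j) (m * M) with hy2
  have hs2' : ∀ i, 0 ≤ s2 i := by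
    intro i
    induction i using Fin.addCases with
    | left i => rw [hs2, Fin.append_left]; exact hs i
    | right i =>
        simp only [hs2, Fin.append_right, hA]
        split_ifs <;> positivity
  have e1 : (∑ i, s2 i • r2 i)
      = (∑ i, s i • r i) + ∑ j, A j • (p j + w' - (m : ℝ) • x) := by
    rw [Fin.sum_univ_add]
    congr 1
    · exact Finset.sum_congr rfl fun i _ => by rw [hs2, hr2, Fin.append_left, Fin.append_left]
    · exact Finset.sum_congr rfl fun j _ => by rw [hs2, hr2, Fin.append_right, Fin.append_right]
  have e2 : (∑ j, (y2 j : ℝ) • p2 j)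
      = (∑ j, (if g (p j) ≤ pi (p j) then 0 else (y j : ℝ)) • p j)
        + ((m * M : ℕ) : ℝ) • x := by
    rw [Fin.sum_univ_castSucc]
    congr 1
    · refine Finset.sum_congr rfl fun j _ => ?_
      rw [hy2, hp2, Fin.snoc_castSucc, Fin.snoc_castSucc]
      split_ifs <;> simp
    · rw [hy2, hp2, Fin.snoc_last, Fin.snoc_last]
  have e3 : (∑ j, A j • (p j + w' - (m : ℝ) • x))
      + ((∑ j, (if g (p j) ≤ pi (p j) then 0 else (y j : ℝ)) • p j)
          + ((m * M : ℕ) : ℝ) • x)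
      = (∑ j, (y j : ℝ) • p j) + (M : ℝ) • w' := by
    have hper : ∀ j, A j • (p j + w' - (m : ℝ) • x)
        + (if g (p j) ≤ pi (p j) then 0 else (y j : ℝ)) • p j
        = (y j : ℝ) • p j + A j • w' - ((m : ℝ) * A j) • x := by
      intro j
      by_cases h : g (p j) ≤ pi (p j) <;>
        simp only [hA, h, if_true, if_false, if_pos, if_neg, not_false_iff] <;> module
    have l1 : (∑ j, (A j • (p j + w' - (m : ℝ) • x)
        + (if g (p j) ≤ pi (p j) then 0 else (y j : ℝ)) • p j))
        = ∑ j, ((y j : ℝ) • p j + A j • w' - ((m : ℝ) * A j) • x) :=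
      Finset.sum_congr rfl fun j _ => hper j
    have l2 : (∑ j, ((y j : ℝ) • p j + A j • w' - ((m : ℝ) * A j) • x))
        = (∑ j, (y j : ℝ) • p j) + (M : ℝ) • w' - ((m : ℝ) * (M : ℝ)) • x := by
      rw [Finset.sum_sub_distrib, Finset.sum_add_distrib, ← Finset.sum_smul,
        ← Finset.sum_smul, ← Finset.mul_sum, hMA]
    calc (∑ j, A j • (p j + w' - (m : ℝ) • x))
        + ((∑ j, (if g (p j) ≤ pi (p j) then 0 else (y j : ℝ)) • p j)
            + ((m * M : ℕ) : ℝ) • x)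
        = (∑ j, (A j • (p j + w' - (m : ℝ) • x)
            + (if g (p j) ≤ pi (p j) then 0 else (y j : ℝ)) • p j))
          + ((m * M : ℕ) : ℝ) • x := by
          rw [Finset.sum_add_distrib]; abel
      _ = ((∑ j, (y j : ℝ) • p j) + (M : ℝ) • w' - ((m : ℝ) * (M : ℝ)) • x)
          + ((m * M : ℕ) : ℝ) • x := by rw [l1, l2]
      _ = (∑ j, (y j : ℝ) • p j) + (M : ℝ) • w' := by push_cast; module
  have hsum2 : (∑ i, s2 i • r2 i) + (∑ j, (y2 j : ℝ) • p2 j) ∈ S := by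
    rw [e1, e2, add_assoc, e3, ← add_assoc]
    exact hw' _ hsum M
  have key := hpi (k + l) (l + 1) r2 p2 (fun _ => Set.mem_univ _) (fun _ => Set.mem_univ _)
    s2 y2 hs2' hsum2
  refine le_trans key (le_of_eq ?_)
  have v1 : (∑ i, psiMax a (r2 i) * s2 i)
      = (∑ i, psiMax a (r i) * s i)
        + ∑ j, psiMax a (p j + w' - (m : ℝ) • x) * A j := by
    rw [Fin.sum_univ_add]
    congr 1
    · exact Finset.sum_congr rfl fun i _ => by rw [hs2, hr2, Fin.append_left, Fin.append_left]
    · exact Finset.sum_congr rfl fun j _ => by rw [hs2, hr2, Fin.append_right, Fin.append_right]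
  have v2 : (∑ j, pi (p2 j) * (y2 j : ℝ))
      = (∑ j, pi (p j) * (if g (p j) ≤ pi (p j) then 0 else (y j : ℝ)))
        + pi x * ((m * M : ℕ) : ℝ) := by
    rw [Fin.sum_univ_castSucc]
    congr 1
    · refine Finset.sum_congr rfl fun j _ => ?_
      rw [hy2, hp2, Fin.snoc_castSucc, Fin.snoc_castSucc]
      split_ifs <;> simp
    · rw [hy2, hp2, Fin.snoc_last, Fin.snoc_last]
  have v3 : (∑ j, psiMax a (p j + w' - (m : ℝ) • x) * A j)
      + ((∑ j, pi (p j) * (if g (p j) ≤ pi (p j) then 0 else (y j : ℝ)))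
          + pi x * ((m * M : ℕ) : ℝ))
      = ∑ j, min (pi (p j)) (g (p j)) * (y j : ℝ) := by
    have c1 : pi x * ((m * M : ℕ) : ℝ) = ∑ j, pi x * ((m : ℝ) * A j) := by
      push_cast [hMA]
      rw [Finset.mul_sum, Finset.mul_sum]
    rw [c1, ← Finset.sum_add_distrib, ← Finset.sum_add_distrib]
    refine Finset.sum_congr rfl fun j _ => ?_
    by_cases h : g (p j) ≤ pi (p j)
    · simp only [hA, h, if_true, if_pos]
      rw [min_eq_right h, hg]
      ring
    · simp only [hA, h, if_false, if_neg, not_false_iff]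
      rw [min_eq_left (le_of_not_ge h)]
      ring
  rw [v1, v2, add_assoc, v3]

lemma minLift_main_le {n : ℕ} {ι : Type} [Fintype ι] [Nonempty ι] {S : Set (Fin n → ℝ)}
    {a : ι → Fin n → ℝ} {pi : (Fin n → ℝ) → ℝ} (h : IsMinimalLifting S (psiMax a) pi)
    {w' : Fin n → ℝ} (hw' : w' ∈ Wplus S) (m : ℕ) (x q : Fin n → ℝ) :
    pi q ≤ psiMax a (q + w' - (m : ℝ) • x) + (m : ℝ) * pi x := by
  have hl := isLifting_min_main h.1 hw' m x
  have he := h.2 _ hl fun q => min_le_left _ _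
  exact min_eq_left_iff.mp (congrFun he q)

end AuxLemmas
theorem stmt11 {n : ℕ} (hn : 1 ≤ n) (b : Fin n → ℝ) (hb : b ∉ Zpts n)
    (Q : Set (Fin n → ℝ)) (hQ : IsRatPolyhedron Q) (S : Set (Fin n → ℝ))
    (hS : S = {x | x - b ∈ Zpts n} ∩ Q)
    {ι : Type} [Fintype ι] [Nonempty ι] (a : ι → Fin n → ℝ) (B : Set (Fin n → ℝ))
    (hB : B = {r | ∀ i, dotp (a i) r ≤ 1}) (hmax : IsMaxFreeNbhd S B)
    (pstar : Fin n → ℝ) (w : Fin n → ℝ) (N : ℕ)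
    (hwN : AttainsSup S (psiMax a) pstar w N)
    (k : ι) (hk : ∀ i, dotp (a i) w ≤ dotp (a k) w) :
    ((⋃ j ∈ Finset.range (N + 1), (fun r => r + (j : ℝ) • pstar) '' spindleK a k w) +
        Wint S ⊆ FixingRegion S (psiMax a) pstar) ∧
      ∀ pi ∈ LiftSet S (psiMax a) pstar,
        ∀ p ∈ ⋃ j ∈ Finset.range (N + 1), (fun r => r + (j : ℝ) • pstar) '' spindleK a k w,
          ∀ u ∈ Wint S,
            pi (p + u) = pi p ∧
              ((pi p : ℝ) : EReal) =
                psiStarB S a (Vpsi S (psiMax a) pstar) pstar ((p, (0 : ℝ))) := by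
  classical
  obtain ⟨hN1, hwS, hVeq, hsup⟩ := hwN
  set lam : ℝ := Vpsi S (psiMax a) pstar with hlam
  have hNpos : (0:ℝ) < (N:ℝ) := by exact_mod_cast hN1
  have hlin : 1 - psiMax a w = (N:ℝ) * lam := by
    rw [div_eq_iff (ne_of_gt hNpos)] at hVeq
    rw [hVeq]; ring
  have KEY : ∀ pi' ∈ LiftSet S (psiMax a) pstar, ∀ j : ℕ, j ≤ N →
      ∀ r0 ∈ spindleK a k w,
      pi' (r0 + (j:ℝ) • pstar) = psiMax a r0 + (j:ℝ) * lam := by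
    intro pi' hpi' j hj r0 hr0
    have hmin : IsMinimalLifting S (psiMax a) pi' := hpi'.1
    have hpv : pi' pstar = lam := hpi'.2
    have hr0k : psiMax a r0 = dotp (a k) r0 := by
      refine psiMax_eq_of_max fun i => ?_
      have h := (hr0 i).1
      rw [dotp_sub_left] at h
      linarith
    have hwr0k : psiMax a (w - r0) = dotp (a k) (w - r0) := by
      refine psiMax_eq_of_max fun i => ?_
      have h := (hr0 i).2
      rw [dotp_sub_left] at h
      linarith
    have hwk : psiMax a w = dotp (a k) w := psiMax_eq_of_max hk
    have hsub : psiMax a (w - r0) = psiMax a w - psiMax a r0 := by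
      rw [hr0k, hwr0k, hwk, dotp_sub_right]
    have hub : pi' (r0 + (j:ℝ) • pstar) ≤ psiMax a r0 + (j:ℝ) * lam := by
      have h := minLift_main_le hmin (zero_mem_Wplus S) j pstar (r0 + (j:ℝ) • pstar)
      have e : r0 + (j:ℝ) • pstar + 0 - (j:ℝ) • pstar = r0 := by abel
      rw [e, hpv] at h
      linarith
    have hlb : psiMax a r0 + (j:ℝ) * lam ≤ pi' (r0 + (j:ℝ) • pstar) := by
      have hmem : (∑ i : Fin 1, (fun _ : Fin 1 => (1:ℝ)) i • (fun _ : Fin 1 => w - r0) i)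
          + (∑ t : Fin 2, ((![1, N - j] t : ℕ) : ℝ) • (![r0 + (j:ℝ) • pstar, pstar] t)) ∈ S := by
        have e : (∑ i : Fin 1, (fun _ : Fin 1 => (1:ℝ)) i • (fun _ : Fin 1 => w - r0) i)
            + (∑ t : Fin 2, ((![1, N - j] t : ℕ) : ℝ) • (![r0 + (j:ℝ) • pstar, pstar] t))
            = w + (N:ℝ) • pstar := by
          simp only [Fin.sum_univ_one, Fin.sum_univ_two, Matrix.cons_val_zero,
            Matrix.cons_val_one, Matrix.head_cons, Nat.cast_one, one_smul,
            Nat.cast_sub hj]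
          module
        rw [e]; exact hwS
      have hval := hmin.1 1 2 (fun _ => w - r0) (![r0 + (j:ℝ) • pstar, pstar])
        (fun _ => Set.mem_univ _) (fun _ => Set.mem_univ _)
        (fun _ => (1:ℝ)) (![1, N - j]) (fun _ => zero_le_one) hmem
      rw [Fin.sum_univ_one, Fin.sum_univ_two] at hval
      simp only [Matrix.cons_val_zero, Matrix.cons_val_one, Matrix.head_cons,
        Nat.cast_one, Nat.cast_sub hj, mul_one] at hval
      have hd : pi' pstar * ((N:ℝ) - (j:ℝ)) = (N:ℝ) * lam - (j:ℝ) * lam := by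
        rw [hpv]; ring
      rw [hsub] at hval
      linarith
    exact le_antisymm hub hlb
  have hWdec : ∀ u ∈ Wplus (S ×ˢ Znn), u.1 ∈ Wplus S ∧ ∃ m : ℕ, u.2 = (m:ℝ) := by
    intro u hu
    constructor
    · intro s hs lam'
      have h0 : ((s, (0:ℝ)) : (Fin n → ℝ) × ℝ) ∈ S ×ˢ Znn := ⟨hs, ⟨0, by simp⟩⟩
      have h1 := (hu _ h0 lam').1
      simpa using h1
    · have h0 : ((w + (N:ℝ) • pstar, (0:ℝ)) : (Fin n → ℝ) × ℝ) ∈ S ×ˢ Znn :=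
        ⟨hwS, ⟨0, by simp⟩⟩
      have h1 := (hu _ h0 1).2
      simp only [Prod.snd_add, Prod.smul_snd, Nat.cast_one, one_smul, zero_add] at h1
      obtain ⟨m, hm⟩ := h1
      exact ⟨m, hm⟩
  have hmemj : ∀ j : ℕ, (((0 : Fin n → ℝ), ((j:ℕ):ℝ)) : (Fin n → ℝ) × ℝ)
      ∈ Wplus (S ×ˢ Znn) := by
    intro j st hst lam'
    refine ⟨?_, ?_⟩
    · simpa using hst.1
    · obtain ⟨k0, hk0⟩ := hst.2
      refine ⟨k0 + lam' * j, ?_⟩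
      simp only [Prod.snd_add, Prod.smul_snd, smul_eq_mul, hk0]
      push_cast
      ring
  have EQV : ∀ pi' ∈ LiftSet S (psiMax a) pstar, ∀ j : ℕ, j ≤ N →
      ∀ r0 ∈ spindleK a k w,
      ((pi' (r0 + (j:ℝ) • pstar) : ℝ) : EReal)
        = psiStarB S a lam pstar ((r0 + (j:ℝ) • pstar, (0:ℝ))) := by
    intro pi' hpi' j hj r0 hr0
    have hval := KEY pi' hpi' j hj r0 hr0
    apply le_antisymm
    · refine le_sInf ?_
      rintro v ⟨u, hu, rfl⟩
      obtain ⟨hu1, m, hm⟩ := hWdec u hu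
      rw [EReal.coe_le_coe_iff]
      have e : ((r0 + (j:ℝ) • pstar, (0:ℝ)) : (Fin n → ℝ) × ℝ) + u
          = (r0 + (j:ℝ) • pstar + u.1, (m:ℝ)) := by
        apply Prod.ext <;> simp [hm]
      rw [e, psiB_eval]
      have h := minLift_main_le hpi'.1 hu1 m pstar (r0 + (j:ℝ) • pstar)
      rw [hpi'.2] at h
      linarith
    · refine sInf_le ?_
      refine ⟨((0 : Fin n → ℝ), ((j:ℕ):ℝ)), hmemj j, ?_⟩
      have e : ((r0 + (j:ℝ) • pstar, (0:ℝ)) : (Fin n → ℝ) × ℝ)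
          + ((0 : Fin n → ℝ), ((j:ℕ):ℝ)) = (r0 + (j:ℝ) • pstar, ((j:ℕ):ℝ)) := by
        apply Prod.ext <;> simp
      rw [e, psiB_eval, EReal.coe_eq_coe_iff]
      have e2 : r0 + (j:ℝ) • pstar - ((j:ℕ):ℝ) • pstar = r0 := by abel
      rw [e2, hval]
      ring
  constructor
  · rintro q hq
    rw [Set.mem_add] at hq
    obtain ⟨p, hp, u, hu, rfl⟩ := hq
    simp only [Set.mem_iUnion, Set.mem_image, Finset.mem_range] at hp
    obtain ⟨j, hj, r0, hr0, rfl⟩ := hp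
    intro pi1 h1 pi2 h2
    have hj' : j ≤ N := Nat.lt_succ_iff.mp hj
    rw [minLift_period h1.1 hu, minLift_period h2.1 hu,
      KEY pi1 h1 j hj' r0 hr0, KEY pi2 h2 j hj' r0 hr0]
  · intro pi hpi p hp u hu
    simp only [Set.mem_iUnion, Set.mem_image, Finset.mem_range] at hp
    obtain ⟨j, hj, r0, hr0, rfl⟩ := hp
    refine ⟨minLift_period hpi.1 hu _, EQV pi hpi j (Nat.lt_succ_iff.mp hj) r0 hr0⟩
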